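/- arXiv:2502.02915 — 2 statements merged into one kernel-verified Lean document; each statement's English description precedes it below -/
import Mathlib

section
/- Let G be a graph, F a set of positively oriented edges of G, t ≥ 2, and α ∈ M_t(F). Then the number of closed walks of length l on G whose abelianization mod t restricts to α on F equals (1/t^{|F|}) Σ_{γ ∈ M_t(F)} ε_t^{-⟨γ,α⟩} trace(A_γ^l). -/
open Finset Matrix

variable {V E : Type}

/-- Initial vertex of an oriented edge `(e, b)`; `b = true` means positively oriented. -/
def einit (vs vt : E → V) (a : E × Bool) : V := if a.2 then vs a.1 else vt a.1

/-- Terminal vertex of an oriented edge. -/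
def eterm (vs vt : E → V) (a : E × Bool) : V := if a.2 then vt a.1 else vs a.1

/-- Inverse (opposite) oriented edge. -/
def einv (a : E × Bool) : E × Bool := (a.1, !a.2)

/-- A closed walk of length `l` on the multigraph, recorded cyclically. -/
abbrev IsClosedWalk (vs vt : E → V) {l : ℕ} (a : ZMod l → E × Bool) : Prop :=
  ∀ i, eterm vs vt (a i) = einit vs vt (a (i + 1))

/-- A circuit: a closed walk without backtracks or tail. -/
abbrev IsCircuit (vs vt : E → V) {l : ℕ} (a : ZMod l → E × Bool) : Prop :=
  IsClosedWalk vs vt a ∧ ∀ i, a (i + 1) ≠ einv (a i)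

/-- The abelianization of a closed walk, as an integer vector over edges. -/
def abel [Fintype E] [DecidableEq E] {l : ℕ} [NeZero l]
    (a : ZMod l → E × Bool) (e : E) : ℤ :=
  ∑ i : ZMod l, if (a i).1 = e then (if (a i).2 then (1 : ℤ) else -1) else 0

/-- The vertex adjacency matrix (counting oriented edges from `v` to `w`). -/
def vertAdj [Fintype E] [DecidableEq V] (vs vt : E → V) : Matrix V V ℕ :=
  Matrix.of fun v w =>
    (univ.filter fun a : E × Bool => einit vs vt a = v ∧ eterm vs vt a = w).card

/-- Oriented edge `a` feeds into `b`. -/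
abbrev Feeds (vs vt : E → V) (a b : E × Bool) : Prop :=
  b ≠ einv a ∧ eterm vs vt a = einit vs vt b

/-- The edge adjacency matrix `W₁`. -/
def edgeAdj [DecidableEq V] [DecidableEq E] (vs vt : E → V) :
    Matrix (E × Bool) (E × Bool) ℕ :=
  Matrix.of fun a b => if Feeds vs vt a b then 1 else 0

/-- `ε_t = exp(2πi/t)`, a primitive `t`-th root of unity. -/
noncomputable def zetat (t : ℕ) : ℂ := Complex.exp (2 * Real.pi * Complex.I / t)

/-- The signed exponent `⟨γ, 1·e⟩` of an oriented edge. -/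
def oexp {t : ℕ} (γ : E → ZMod t) (a : E × Bool) : ℤ :=
  if a.2 then ((γ a.1).val : ℤ) else -((γ a.1).val : ℤ)

/-- The twisted vertex adjacency matrix `A_γ`. -/
noncomputable def twistedVertAdj [Fintype E] [DecidableEq V] (vs vt : E → V)
    (t : ℕ) (γ : E → ZMod t) : Matrix V V ℂ :=
  Matrix.of fun v w =>
    ∑ a : E × Bool, if einit vs vt a = v ∧ eterm vs vt a = w then zetat t ^ oexp γ a else 0

/-- The twisted edge adjacency matrix `W_{1,γ}`. -/
noncomputable def twistedEdgeAdj [DecidableEq V] [DecidableEq E] (vs vt : E → V)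
    (t : ℕ) (γ : E → ZMod t) : Matrix (E × Bool) (E × Bool) ℂ :=
  Matrix.of fun a b => if Feeds vs vt a b then zetat t ^ oexp γ a else 0

/-- The twisted vertex adjacency matrix for `t = 2`, with `±1` entries. -/
noncomputable def twistedVertAdj2 [Fintype E] [DecidableEq V] (vs vt : E → V)
    (γ : E → ZMod 2) : Matrix V V ℂ :=
  Matrix.of fun v w =>
    ∑ a : E × Bool, if einit vs vt a = v ∧ eterm vs vt a = w then (-1 : ℂ) ^ (γ a.1).val else 0

/-- Extension by zero of an element of `M_t(F)` to all edges. -/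
def extF [DecidableEq E] {t : ℕ} (F : Finset E) (γ : {e : E // e ∈ F} → ZMod t) (e : E) :
    ZMod t := if h : e ∈ F then γ ⟨e, h⟩ else 0

/-- Extension by zero of an element of `M_t(E^c(T))` to all edges. -/
def extC [DecidableEq E] {t : ℕ} (T : Finset E) (γ : {e : E // e ∉ T} → ZMod t) (e : E) :
    ZMod t := if h : e ∈ T then 0 else γ ⟨e, h⟩

/-- Reachability using only edges from the set `F` (edges traversable both ways). -/
def Reach (vs vt : E → V) (F : Finset E) : V → V → Prop :=
  Relation.ReflTransGen (fun v w => ∃ e ∈ F, (vs e = v ∧ vt e = w) ∨ (vs e = w ∧ vt e = v))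

/-- Degree of a vertex (loops counted twice). -/
def degree [Fintype E] [DecidableEq V] (vs vt : E → V) (v : V) : ℕ :=
  (univ.filter fun e => vs e = v).card + (univ.filter fun e => vt e = v).card

/-- `α` is an `R`-circulation: balanced at every vertex. -/
def IsCirc [Fintype E] [DecidableEq V] (vs vt : E → V) {R : Type} [AddCommMonoid R]
    (α : E → R) : Prop :=
  ∀ v, ∑ e ∈ univ.filter (fun e => vs e = v), α e = ∑ e ∈ univ.filter (fun e => vt e = v), α e

/-- `T` is a spanning tree: its edges connect all vertices and `|T| = |V| - 1`. -/
def IsSpanningTree [Fintype V] (vs vt : E → V) (T : Finset E) : Prop :=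
  (∀ v w : V, Reach vs vt T v w) ∧ T.card + 1 = Fintype.card V

/-- The vertex-edge incidence matrix. -/
def incidence (R : Type) [Ring R] [DecidableEq V] (vs vt : E → V) : Matrix V E R :=
  Matrix.of fun v e => (if vs e = v then (1 : R) else 0) - (if vt e = v then 1 else 0)

/-- An Eulerian circuit: a closed walk using every edge exactly once. -/
abbrev IsEulerianCircuit [Fintype E] (vs vt : E → V) (a : ZMod (Fintype.card E) → E × Bool) :
    Prop :=
  IsClosedWalk vs vt a ∧ Function.Bijective (fun i => (a i).1)

/-- Eulerian circuits up to cyclic rotation (Eulerian cycles). -/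
def eulSetoid [Fintype E] (vs vt : E → V) :
    Setoid {a : ZMod (Fintype.card E) → E × Bool // IsEulerianCircuit vs vt a} where
  r a b := ∃ k, ∀ i, b.1 i = a.1 (i + k)
  iseqv := by
    refine ⟨fun a => ⟨0, fun i => by rw [add_zero]⟩, ?_, ?_⟩
    · rintro a b ⟨k, h⟩
      exact ⟨-k, fun i => by rw [h (i + -k), neg_add_cancel_right]⟩
    · rintro a b c ⟨k, h⟩ ⟨k', h'⟩
      exact ⟨k' + k, fun i => by rw [h' i, h (i + k'), add_assoc]⟩

instance [Fintype E] [DecidableEq E] [DecidableEq V] [NeZero (Fintype.card E)]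
    (vs vt : E → V) : DecidableRel (eulSetoid vs vt).r :=
  fun a b => inferInstanceAs (Decidable (∃ k, ∀ i, b.1 i = a.1 (i + k)))

instance [Fintype E] [DecidableEq E] [DecidableEq V] [NeZero (Fintype.card E)]
    (vs vt : E → V) : Fintype (Quotient (eulSetoid vs vt)) :=
  @Quotient.fintype _ _ (eulSetoid vs vt)
    (fun a b => inferInstanceAs (Decidable (∃ k, ∀ i, b.1 i = a.1 (i + k))))


set_option linter.unusedSectionVars false
set_option maxHeartbeats 1000000

section chiSection

variable (t : ℕ) [NeZero t]

lemma zetat_prim : IsPrimitiveRoot (zetat t) t :=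
  Complex.isPrimitiveRoot_exp t (NeZero.ne t)

lemma zetat_ne_zero : zetat t ≠ 0 := Complex.exp_ne_zero _

lemma zetat_pow_t : zetat t ^ t = 1 := (zetat_prim t).pow_eq_one

/-- The additive character `x ↦ ε_t^x` of `ZMod t`. -/
noncomputable def chiZ (x : ZMod t) : ℂ := zetat t ^ x.val

lemma zetat_pow_mod (n : ℕ) : zetat t ^ (n % t) = zetat t ^ n := by
  conv_rhs => rw [← Nat.div_add_mod n t]
  rw [pow_add, pow_mul, zetat_pow_t, one_pow, one_mul]

lemma chiZ_zero : chiZ t 0 = 1 := by simp [chiZ, ZMod.val_zero]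

lemma chiZ_add (x y : ZMod t) : chiZ t (x + y) = chiZ t x * chiZ t y := by
  rw [chiZ, chiZ, chiZ, ZMod.val_add, zetat_pow_mod, pow_add]

lemma chiZ_sum {β : Type} (s : Finset β) (f : β → ZMod t) :
    chiZ t (∑ b ∈ s, f b) = ∏ b ∈ s, chiZ t (f b) := by
  classical
  induction s using Finset.induction with
  | empty => simp [chiZ_zero]
  | insert a s hx ih => rw [Finset.sum_insert hx, Finset.prod_insert hx, chiZ_add, ih]

lemma zetat_zpow (n : ℤ) : zetat t ^ n = chiZ t (n : ZMod t) := by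
  have h : ((n : ZMod t).val : ℤ) = n % t := ZMod.val_intCast n
  have h2 : n = (t : ℤ) * (n / t) + ((n : ZMod t).val : ℤ) := by
    rw [h]; exact (Int.mul_ediv_add_emod n t).symm
  conv_lhs => rw [h2]
  rw [zpow_add₀ (zetat_ne_zero t), _root_.zpow_mul, zpow_natCast, zetat_pow_t, _root_.one_zpow,
    one_mul, zpow_natCast, chiZ]

lemma chiZ_nsmul (n : ℕ) (d : ZMod t) : chiZ t (n • d) = chiZ t d ^ n := by
  induction n with
  | zero => simp [chiZ_zero]
  | succ n ih => rw [succ_nsmul, chiZ_add, ih, pow_succ]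

lemma chiZ_eq_one_iff (d : ZMod t) : chiZ t d = 1 ↔ d = 0 := by
  rw [chiZ, (zetat_prim t).pow_eq_one_iff_dvd]
  constructor
  · intro hdvd
    have := Nat.eq_zero_of_dvd_of_lt hdvd
    rcases Nat.eq_zero_or_pos d.val with h0 | hp
    · exact (ZMod.val_eq_zero d).mp h0
    · exact absurd (ZMod.val_lt d) (by omega)
  · rintro rfl; simp [ZMod.val_zero]

lemma chiZ_orth (d : ZMod t) :
    ∑ c : ZMod t, chiZ t (c * d) = if d = 0 then (t : ℂ) else 0 := by
  have hc : ∀ c : ZMod t, chiZ t (c * d) = chiZ t d ^ c.val := by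
    intro c
    rw [← chiZ_nsmul, nsmul_eq_mul, ZMod.natCast_rightInverse c]
  simp_rw [hc]
  obtain ⟨s, rfl⟩ : ∃ s, t = s + 1 := ⟨t - 1, (Nat.succ_pred_eq_of_pos (NeZero.pos t)).symm⟩
  have hrange : ∑ c : ZMod (s+1), chiZ (s+1) d ^ c.val
      = ∑ k ∈ Finset.range (s+1), chiZ (s+1) d ^ k :=
    Fin.sum_univ_eq_sum_range _ _
  rw [hrange]
  by_cases hd : d = 0
  · simp [hd, chiZ_zero]
  · rw [if_neg hd]
    have hne : chiZ (s+1) d ≠ 1 := fun h => hd ((chiZ_eq_one_iff _ d).mp h)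
    rw [geom_sum_eq hne]
    have hone : chiZ (s+1) d ^ (s+1) = 1 := by
      rw [chiZ, ← pow_mul, mul_comm, pow_mul, zetat_pow_t, one_pow]
    rw [hone, sub_self, zero_div]

end chiSection

/-- The snoc equivalence used to peel the last step off a walk. -/
def snocEquiv' (ι : Type) (m : ℕ) : ((Fin m → ι) × ι) ≃ (Fin (m+1) → ι) where
  toFun p := Fin.snoc p.1 p.2
  invFun g := (Fin.init g, g (Fin.last m))
  left_inv p := by simp [Fin.init_snoc, Fin.snoc_last]
  right_inv g := by simp [Fin.snoc_init_self]

lemma pow_apply_walk {ι : Type} [Fintype ι] [DecidableEq ι] (B : Matrix ι ι ℂ) :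
    ∀ (m : ℕ) (i j : ι), (B ^ m) i j =
      ∑ g : Fin m → ι,
        (∏ k : Fin m, B ((Fin.cons i g : Fin (m+1) → ι) k.castSucc)
            ((Fin.cons i g : Fin (m+1) → ι) k.succ)) *
          (if (Fin.cons i g : Fin (m+1) → ι) (Fin.last m) = j then 1 else 0) := by
  intro m
  induction m with
  | zero =>
      intro i j
      rw [pow_zero]
      rw [Fintype.sum_unique]
      simp [Matrix.one_apply]
  | succ m ih =>
      intro i j
      have lhs_eq : (B ^ (m+1)) i j = ∑ x : Fin m → ι,
          (∏ k : Fin m, B ((Fin.cons i x : Fin (m+1) → ι) k.castSucc)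
            ((Fin.cons i x : Fin (m+1) → ι) k.succ)) *
            B ((Fin.cons i x : Fin (m+1) → ι) (Fin.last m)) j := by
        rw [pow_succ, Matrix.mul_apply]
        simp_rw [ih i, Finset.sum_mul]
        rw [Finset.sum_comm]
        apply Finset.sum_congr rfl
        intro x _
        simp only [ite_mul, mul_ite, mul_one, mul_zero, zero_mul, one_mul]
        rw [Finset.sum_ite_eq, if_pos (Finset.mem_univ _)]
      have rhs_eq : (∑ g : Fin (m+1) → ι,
          (∏ k : Fin (m+1), B ((Fin.cons i g : Fin (m+2) → ι) k.castSucc)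
            ((Fin.cons i g : Fin (m+2) → ι) k.succ)) *
            (if (Fin.cons i g : Fin (m+2) → ι) (Fin.last (m+1)) = j then 1 else 0)) =
          ∑ x : Fin m → ι,
          (∏ k : Fin m, B ((Fin.cons i x : Fin (m+1) → ι) k.castSucc)
            ((Fin.cons i x : Fin (m+1) → ι) k.succ)) *
            B ((Fin.cons i x : Fin (m+1) → ι) (Fin.last m)) j := by
        rw [← Equiv.sum_comp (snocEquiv' ι m)]
        rw [Fintype.sum_prod_type]
        apply Finset.sum_congr rfl
        intro x _
        simp only [snocEquiv', Equiv.coe_fn_mk, Fin.cons_snoc_eq_snoc_cons,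
          Fin.prod_univ_castSucc, Fin.succ_castSucc, Fin.snoc_castSucc, Fin.succ_last,
          Fin.snoc_last]
        simp only [ite_mul, mul_ite, mul_one, mul_zero, zero_mul, one_mul]
        rw [Finset.sum_ite_eq', if_pos (Finset.mem_univ _)]
      exact lhs_eq.trans rhs_eq.symm

lemma trace_pow_cyclic {ι : Type} [Fintype ι] [DecidableEq ι] (B : Matrix ι ι ℂ) (m : ℕ) :
    Matrix.trace (B ^ (m + 1)) =
      ∑ a : ZMod (m + 1) → ι, ∏ k : ZMod (m + 1), B (a k) (a (k + 1)) := by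
  show Matrix.trace (B ^ (m + 1)) =
      ∑ a : Fin (m + 1) → ι, ∏ k : Fin (m + 1), B (a k) (a (k + 1))
  rw [Matrix.trace]
  simp only [Matrix.diag]
  simp_rw [pow_apply_walk B (m+1)]
  rw [Finset.sum_comm]
  have hlast : ∀ (i : ι) (g : Fin (m+1) → ι),
      (Fin.cons i g : Fin (m+2) → ι) (Fin.last (m+1)) = g (Fin.last m) := by
    intro i g
    rw [← Fin.succ_last, Fin.cons_succ]
  have step : ∀ g : Fin (m+1) → ι,
      (∑ i : ι, (∏ k : Fin (m+1), B ((Fin.cons i g : Fin (m+2) → ι) k.castSucc)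
          ((Fin.cons i g : Fin (m+2) → ι) k.succ)) *
        (if (Fin.cons i g : Fin (m+2) → ι) (Fin.last (m+1)) = i then 1 else 0)) =
      ∏ k : Fin (m+1), B ((Fin.cons (g (Fin.last m)) g : Fin (m+2) → ι) k.castSucc)
        ((Fin.cons (g (Fin.last m)) g : Fin (m+2) → ι) k.succ) := by
    intro g
    simp_rw [hlast]
    simp only [mul_ite, mul_one, mul_zero]
    rw [Finset.sum_ite_eq, if_pos (Finset.mem_univ _)]
  rw [Finset.sum_congr rfl (fun g _ => step g)]
  have hrotbij : Function.Bijective (fun (a : Fin (m+1) → ι) => (fun k => a (k + 1))) := by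
    have hfe : (fun (a : Fin (m+1) → ι) => (fun k => a (k + 1))) =
        fun a => a ∘ (Equiv.addRight (1 : Fin (m+1))) := rfl
    rw [hfe]
    exact (Equiv.arrowCongr (Equiv.addRight (1 : Fin (m+1))).symm (Equiv.refl ι)).bijective
  refine (Fintype.sum_bijective _ hrotbij _ _ ?_).symm
  intro a
  have hlast1 : a (Fin.last m + 1) = a 0 := by rw [Fin.last_add_one]
  have hcons : ∀ k : Fin (m+1),
      (Fin.cons (a 0) (fun k' => a (k' + 1)) : Fin (m+2) → ι) (k.castSucc) = a k := by
    intro k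
    induction k using Fin.cases with
    | zero => rw [Fin.castSucc_zero, Fin.cons_zero]
    | succ j => rw [← Fin.succ_castSucc, Fin.cons_succ, Fin.coeSucc_eq_succ]
  simp only [hlast1]
  apply Finset.prod_congr rfl
  intro k _
  rw [hcons k, Fin.cons_succ]

lemma sum_subtype_ite {E : Type} [DecidableEq E] {β : Type} [AddCommMonoid β] (F : Finset E)
    (x : E) (f : {e : E // e ∈ F} → β) :
    (∑ e : {e : E // e ∈ F}, if x = e.1 then f e else 0) =
      if h : x ∈ F then f ⟨x, h⟩ else 0 := by
  by_cases h : x ∈ F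
  · rw [dif_pos h]
    rw [Finset.sum_eq_single (⟨x, h⟩ : {e : E // e ∈ F})]
    · rw [if_pos rfl]
    · intro b _ hb
      rw [if_neg]
      intro hx
      exact hb (Subtype.ext hx.symm)
    · intro hmem; exact absurd (Finset.mem_univ _) hmem
  · rw [dif_neg h]
    apply Finset.sum_eq_zero
    intro b _
    rw [if_neg]
    intro hx
    exact h (hx.symm ▸ b.2)

lemma orth_pi {E : Type} [DecidableEq E] (F : Finset E) (t : ℕ) [NeZero t]
    (d : {e : E // e ∈ F} → ZMod t) :
    (∑ γ : {e : E // e ∈ F} → ZMod t, ∏ e : {e : E // e ∈ F}, chiZ t (γ e * d e)) =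
      if d = 0 then (t : ℂ) ^ F.card else 0 := by
  classical
  have h := Finset.prod_univ_sum (fun _ : {e : E // e ∈ F} => (univ : Finset (ZMod t)))
    (fun e c => chiZ t (c * d e))
  rw [Fintype.piFinset_univ] at h
  rw [← h]
  simp_rw [chiZ_orth]
  by_cases hd : d = 0
  · rw [if_pos hd]
    subst hd
    simp [Finset.prod_const, Finset.card_univ, Fintype.card_coe]
  · rw [if_neg hd]
    obtain ⟨e, he⟩ : ∃ e, d e ≠ 0 := by
      by_contra hcon; push_neg at hcon; exact hd (funext hcon)
    exact Finset.prod_eq_zero (Finset.mem_univ e) (if_neg he)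

theorem stmt8 {V E : Type} [Fintype V] [Fintype E] [DecidableEq V] [DecidableEq E]
    (vs vt : E → V) (t : ℕ) [NeZero t] (ht : 2 ≤ t)
    (F : Finset E) (α : {e : E // e ∈ F} → ZMod t) (l : ℕ) [NeZero l] :
    (Fintype.card {a : ZMod l → E × Bool // IsClosedWalk vs vt a ∧
        (fun e : {e : E // e ∈ F} => ((abel a e.1 : ℤ) : ZMod t)) = α} : ℂ) =
      (1 / (t : ℂ) ^ F.card) *
        ∑ γ : {e : E // e ∈ F} → ZMod t,
          zetat t ^ (-(((∑ e : {e : E // e ∈ F}, γ e * α e).val : ℤ))) *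
            Matrix.trace ((twistedVertAdj vs vt t (extF F γ)) ^ l) := by
  obtain ⟨m, rfl⟩ : ∃ m, l = m + 1 := ⟨l - 1, (Nat.succ_pred_eq_of_pos (NeZero.pos l)).symm⟩
  have hT : ((t : ℂ)) ^ F.card ≠ 0 := pow_ne_zero _ (Nat.cast_ne_zero.mpr (NeZero.ne t))
  have step1 : ∀ γ : {e : E // e ∈ F} → ZMod t,
      Matrix.trace ((twistedVertAdj vs vt t (extF F γ)) ^ (m+1)) =
        ∑ a : ZMod (m+1) → E × Bool,
          if IsClosedWalk vs vt a then
            chiZ t (∑ e : {e : E // e ∈ F}, γ e * ((abel a e.1 : ℤ) : ZMod t)) else 0 := by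
    intro γ
    rw [trace_pow_cyclic]
    have expand : ∀ v : ZMod (m+1) → V,
        (∏ k : ZMod (m+1), twistedVertAdj vs vt t (extF F γ) (v k) (v (k+1))) =
        ∑ a : ZMod (m+1) → E × Bool, ∏ k : ZMod (m+1),
          (if einit vs vt (a k) = v k ∧ eterm vs vt (a k) = v (k+1)
            then zetat t ^ oexp (extF F γ) (a k) else 0) := by
      intro v
      simp only [twistedVertAdj, Matrix.of_apply]
      have h := Finset.prod_univ_sum (fun _ : ZMod (m+1) => (univ : Finset (E × Bool)))
        (fun k b => if einit vs vt b = v k ∧ eterm vs vt b = v (k+1)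
          then zetat t ^ oexp (extF F γ) b else 0)
      rw [Fintype.piFinset_univ] at h
      rw [h]
    rw [Finset.sum_congr rfl (fun v _ => expand v), Finset.sum_comm]
    apply Finset.sum_congr rfl
    intro a _
    have hprod : ∀ v : ZMod (m+1) → V,
        (∏ k : ZMod (m+1), (if einit vs vt (a k) = v k ∧ eterm vs vt (a k) = v (k+1)
          then zetat t ^ oexp (extF F γ) (a k) else 0)) =
        if (∀ k, einit vs vt (a k) = v k ∧ eterm vs vt (a k) = v (k+1))
          then (∏ k : ZMod (m+1), zetat t ^ oexp (extF F γ) (a k)) else 0 := by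
      intro v
      rw [Finset.prod_ite_zero]
      simp only [Finset.mem_univ, true_implies]
    rw [Finset.sum_congr rfl (fun v _ => hprod v)]
    have hexp : (∏ k : ZMod (m+1), zetat t ^ oexp (extF F γ) (a k)) =
        chiZ t (∑ e : {e : E // e ∈ F}, γ e * ((abel a e.1 : ℤ) : ZMod t)) := by
      have h1 : ∀ b : E × Bool, zetat t ^ oexp (extF F γ) b =
          chiZ t (if b.2 then extF F γ b.1 else - extF F γ b.1) := by
        intro b
        rw [zetat_zpow]
        congr 1
        rw [oexp]
        by_cases hb : b.2
        · rw [if_pos hb, if_pos hb, Int.cast_natCast,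
            ZMod.natCast_rightInverse (extF F γ b.1)]
        · rw [if_neg hb, if_neg hb, Int.cast_neg, Int.cast_natCast,
            ZMod.natCast_rightInverse (extF F γ b.1)]
      calc ∏ k : ZMod (m+1), zetat t ^ oexp (extF F γ) (a k)
          = ∏ k : ZMod (m+1),
              chiZ t (if (a k).2 then extF F γ (a k).1 else - extF F γ (a k).1) :=
            Finset.prod_congr rfl (fun k _ => h1 (a k))
        _ = chiZ t (∑ k : ZMod (m+1),
              (if (a k).2 then extF F γ (a k).1 else - extF F γ (a k).1)) :=
            (chiZ_sum t univ _).symm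
        _ = chiZ t (∑ e : {e : E // e ∈ F}, γ e * ((abel a e.1 : ℤ) : ZMod t)) := by
            congr 1
            have hper : ∀ e : {e : E // e ∈ F}, γ e * ((abel a e.1 : ℤ) : ZMod t) =
                ∑ k : ZMod (m+1),
                  (if (a k).1 = e.1 then (γ e * (if (a k).2 then 1 else -1)) else 0) := by
              intro e
              rw [abel, Int.cast_sum, Finset.mul_sum]
              apply Finset.sum_congr rfl
              intro k _
              by_cases h1' : (a k).1 = e.1 <;> by_cases h2 : (a k).2 <;> simp [h1', h2]
            rw [Finset.sum_congr rfl (fun e _ => hper e), Finset.sum_comm]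
            apply Finset.sum_congr rfl
            intro k _
            rw [sum_subtype_ite F ((a k).1) (fun e => γ e * (if (a k).2 then 1 else -1))]
            by_cases hm : (a k).1 ∈ F <;> by_cases hb : (a k).2 <;> simp [extF, hm, hb]
    by_cases hcw : IsClosedWalk vs vt a
    · rw [if_pos hcw, ← hexp]
      have hcond : ∀ v : ZMod (m+1) → V,
          (∀ k, einit vs vt (a k) = v k ∧ eterm vs vt (a k) = v (k+1)) ↔
            v = fun k => einit vs vt (a k) := by
        intro v
        constructor
        · intro h; funext k; exact (h k).1.symm
        · rintro rfl; intro k; exact ⟨rfl, hcw k⟩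
      rw [Finset.sum_congr rfl (fun v _ => if_congr (hcond v) rfl rfl)]
      rw [Finset.sum_ite_eq', if_pos (Finset.mem_univ _)]
    · rw [if_neg hcw]
      apply Finset.sum_eq_zero
      intro v _
      rw [if_neg]
      intro h
      exact hcw (fun k => (h k).2.trans ((h (k+1)).1.symm))
  have hζ : ∀ γ : {e : E // e ∈ F} → ZMod t,
      zetat t ^ (-(((∑ e : {e : E // e ∈ F}, γ e * α e).val : ℤ))) =
        chiZ t (-(∑ e : {e : E // e ∈ F}, γ e * α e)) := by
    intro γ
    rw [zetat_zpow]
    congr 1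
    rw [Int.cast_neg, Int.cast_natCast,
      ZMod.natCast_rightInverse (∑ e : {e : E // e ∈ F}, γ e * α e)]
  simp_rw [step1, hζ]
  have swap : (∑ γ : {e : E // e ∈ F} → ZMod t,
        chiZ t (-(∑ e : {e : E // e ∈ F}, γ e * α e)) *
          ∑ a : ZMod (m+1) → E × Bool,
            (if IsClosedWalk vs vt a then
              chiZ t (∑ e : {e : E // e ∈ F}, γ e * ((abel a e.1 : ℤ) : ZMod t)) else 0)) =
      ∑ a : ZMod (m+1) → E × Bool, ∑ γ : {e : E // e ∈ F} → ZMod t,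
        chiZ t (-(∑ e : {e : E // e ∈ F}, γ e * α e)) *
          (if IsClosedWalk vs vt a then
            chiZ t (∑ e : {e : E // e ∈ F}, γ e * ((abel a e.1 : ℤ) : ZMod t)) else 0) := by
    simp_rw [Finset.mul_sum]
    exact Finset.sum_comm
  rw [swap]
  have key : ∀ a : ZMod (m+1) → E × Bool,
      (∑ γ : {e : E // e ∈ F} → ZMod t,
        chiZ t (-(∑ e : {e : E // e ∈ F}, γ e * α e)) *
          (if IsClosedWalk vs vt a then
            chiZ t (∑ e : {e : E // e ∈ F}, γ e * ((abel a e.1 : ℤ) : ZMod t)) else 0)) =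
      if IsClosedWalk vs vt a ∧
          (fun e : {e : E // e ∈ F} => ((abel a e.1 : ℤ) : ZMod t)) = α
        then (t : ℂ) ^ F.card else 0 := by
    intro a
    by_cases hcw : IsClosedWalk vs vt a
    · simp_rw [if_pos hcw]
      rw [if_congr (and_iff_right hcw) rfl rfl]
      have hterm : ∀ γ : {e : E // e ∈ F} → ZMod t,
          chiZ t (-(∑ e : {e : E // e ∈ F}, γ e * α e)) *
            chiZ t (∑ e : {e : E // e ∈ F}, γ e * ((abel a e.1 : ℤ) : ZMod t)) =
          ∏ e : {e : E // e ∈ F},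
            chiZ t (γ e * (((abel a e.1 : ℤ) : ZMod t) - α e)) := by
        intro γ
        rw [← chiZ_add, ← chiZ_sum]
        congr 1
        rw [neg_add_eq_sub, ← Finset.sum_sub_distrib]
        exact Finset.sum_congr rfl (fun e _ => (mul_sub _ _ _).symm)
      rw [Finset.sum_congr rfl (fun γ _ => hterm γ)]
      rw [orth_pi F t (fun e => ((abel a e.1 : ℤ) : ZMod t) - α e)]
      have hiff : ((fun e : {e : E // e ∈ F} => ((abel a e.1 : ℤ) : ZMod t) - α e) = 0) ↔
          ((fun e : {e : E // e ∈ F} => ((abel a e.1 : ℤ) : ZMod t)) = α) := by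
        constructor
        · intro h; funext e
          exact sub_eq_zero.mp (by simpa using congrFun h e)
        · intro h; funext e
          rw [Pi.zero_apply, sub_eq_zero]
          exact congrFun h e
      exact if_congr hiff rfl rfl
    · simp_rw [if_neg hcw, mul_zero, Finset.sum_const_zero]
      rw [if_neg (fun hc => hcw hc.1)]
  rw [Finset.sum_congr rfl (fun a _ => key a)]
  rw [Fintype.card_subtype, Finset.card_filter, Nat.cast_sum, Finset.mul_sum]
  apply Finset.sum_congr rfl
  intro a _
  by_cases hP : IsClosedWalk vs vt a ∧
      (fun e : {e : E // e ∈ F} => ((abel a e.1 : ℤ) : ZMod t)) = α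
  · rw [if_pos hP, if_pos hP, Nat.cast_one, one_div, inv_mul_cancel₀ hT]
  · rw [if_neg hP, if_neg hP, Nat.cast_zero, mul_zero]
end

section
/- Let G be an Eulerian graph of genus g with m edges and T a spanning tree of G. Then ec(G) = (1/(m·2^g)) Σ_{γ ∈ M₂(E^c(T))} (-1)^{σ(γ)} trace(A_γ^m), where σ(γ) is the number of nonzero coordinates of γ and A_γ is the twisted vertex adjacency matrix with respect to γ (with t=2, so entries are ±1 signed counts). -/
open Finset Matrix

variable {V E : Type}

section TracePow

variable {ι : Type} [Fintype ι] [DecidableEq ι]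

/-- Prepend a vertex to a path. -/
def chn {ι : Type} {l : ℕ} (x : ι) (f : Fin l → ι) : Fin (l+1) → ι :=
  Fin.cons (α := fun _ => ι) x f

@[simp] lemma chn_zero {ι : Type} {l : ℕ} (x : ι) (f : Fin l → ι) : chn x f 0 = x := rfl
@[simp] lemma chn_succ {ι : Type} {l : ℕ} (x : ι) (f : Fin l → ι) (j : Fin l) :
    chn x f j.succ = f j := by simp [chn]

lemma pow_apply_paths (M : Matrix ι ι ℂ) : ∀ (l : ℕ) (x y : ι),
    (M ^ l) x y = ∑ f : Fin l → ι,
      (∏ k : Fin l, M (chn x f k.castSucc) (f k)) *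
        (if chn x f (Fin.last l) = y then 1 else 0) := by
  intro l
  induction l with
  | zero =>
    intro x y
    simp only [pow_zero, Matrix.one_apply]
    haveI : Subsingleton (Fin 0 → ι) := ⟨fun a b => funext fun i => i.elim0⟩
    rw [Fintype.sum_subsingleton _ (fun i : Fin 0 => x)]
    simp [Fin.last, chn]
  | succ l ih =>
    intro x y
    rw [pow_succ' M l, Matrix.mul_apply]
    symm
    rw [← (Fin.consEquiv fun _ : Fin (l+1) => ι).sum_comp, Fintype.sum_prod_type]
    refine Finset.sum_congr rfl fun z _ => ?_
    rw [ih z y, Finset.mul_sum]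
    refine Finset.sum_congr rfl fun f _ => ?_
    have hcons : (Fin.consEquiv fun _ : Fin (l+1) => ι) (z, f) = chn z f := rfl
    rw [hcons]
    have h1 : ∀ j : Fin l, chn x (chn z f) j.succ.castSucc = chn z f j.castSucc := by
      intro j; rw [← Fin.succ_castSucc, chn_succ]
    have h2 : chn x (chn z f) (Fin.last (l+1)) = chn z f (Fin.last l) := by
      rw [← Fin.succ_last, chn_succ]
    rw [Fin.prod_univ_succ, h2]
    have hp : (∏ j : Fin l, M (chn x (chn z f) j.succ.castSucc) (chn z f j.succ))
        = ∏ j : Fin l, M (chn z f j.castSucc) (f j) :=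
      Finset.prod_congr rfl fun j _ => by rw [h1 j, chn_succ]
    rw [hp]
    simp only [Fin.castSucc_zero, chn_zero, chn_succ]
    rw [mul_assoc]

lemma trace_pow_cyclic_s14 (M : Matrix ι ι ℂ) (l : ℕ) :
    Matrix.trace (M ^ (l+1)) = ∑ a : Fin (l+1) → ι, ∏ t : Fin (l+1), M (a t) (a (t+1)) := by
  rw [Matrix.trace]
  simp only [Matrix.diag, pow_apply_paths M (l+1)]
  rw [Finset.sum_comm]
  have hlast : ∀ (x : ι) (f : Fin (l+1) → ι), chn x f (Fin.last (l+1)) = f (Fin.last l) := by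
    intro x f; rw [← Fin.succ_last, chn_succ]
  have step : ∀ f : Fin (l+1) → ι,
      (∑ x : ι, (∏ k : Fin (l+1), M (chn x f k.castSucc) (f k)) *
        (if chn x f (Fin.last (l+1)) = x then 1 else 0))
      = ∏ t : Fin (l+1), M (f t) (f (t+1)) := by
    intro f
    have : ∀ x : ι, (∏ k : Fin (l+1), M (chn x f k.castSucc) (f k)) *
        (if chn x f (Fin.last (l+1)) = x then 1 else 0)
        = if f (Fin.last l) = x then (∏ k : Fin (l+1), M (chn x f k.castSucc) (f k)) else 0 := by
      intro x
      rw [hlast]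
      split <;> simp
    rw [Finset.sum_congr rfl fun x _ => this x, Finset.sum_ite_eq univ (f (Fin.last l))
      (fun x => ∏ k : Fin (l+1), M (chn x f k.castSucc) (f k)), if_pos (mem_univ _)]
    -- now prove the cyclic product identity
    rw [Fin.prod_univ_succ, Fin.prod_univ_castSucc]
    have h1 : ∀ j : Fin l, chn (f (Fin.last l)) f j.succ.castSucc = f j.castSucc := by
      intro j; rw [← Fin.succ_castSucc, chn_succ]
    have h2 : ∀ j : Fin l, (j.castSucc : Fin (l+1)) + 1 = j.succ := by
      intro j
      apply Fin.ext
      simp [Fin.val_add_one_of_lt, Fin.castSucc_lt_last]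
    have h3 : (Fin.last l : Fin (l+1)) + 1 = 0 := by
      apply Fin.ext
      simp [Fin.val_add]
    rw [h3]
    have hp : (∏ j : Fin l, M (chn (f (Fin.last l)) f j.succ.castSucc) (f j.succ))
        = ∏ j : Fin l, M (f j.castSucc) (f (j.castSucc + 1)) :=
      Finset.prod_congr rfl fun j _ => by rw [h1 j, h2 j]
    rw [hp, Fin.castSucc_zero, chn_zero]
    exact mul_comm _ _
  exact Finset.sum_congr rfl fun f _ => step f

lemma trace_pow_zmod (M : Matrix ι ι ℂ) (l : ℕ) [NeZero l] :
    Matrix.trace (M ^ l) = ∑ a : ZMod l → ι, ∏ t : ZMod l, M (a t) (a (t+1)) := by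
  obtain ⟨l', rfl⟩ := Nat.exists_eq_succ_of_ne_zero (NeZero.ne l)
  exact trace_pow_cyclic_s14 M l'

end TracePow

section Factor
variable {V E : Type} [Fintype V] [Fintype E] [DecidableEq V] [DecidableEq E]

/-- Edge-level twisted transfer matrix. -/
noncomputable def Mg (vs vt : E → V) (γ : E → ZMod 2) : Matrix (E × Bool) (E × Bool) ℂ :=
  Matrix.of fun a b => if eterm vs vt a = einit vs vt b then (-1 : ℂ) ^ (γ b.1).val else 0

noncomputable def Bm (vs vt : E → V) (γ : E → ZMod 2) : Matrix V (E × Bool) ℂ :=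
  Matrix.of fun v a => if einit vs vt a = v then (-1 : ℂ) ^ (γ a.1).val else 0

noncomputable def Cm (vs vt : E → V) : Matrix (E × Bool) V ℂ :=
  Matrix.of fun a w => if eterm vs vt a = w then 1 else 0

lemma tva2_eq_mul (vs vt : E → V) (γ : E → ZMod 2) :
    twistedVertAdj2 vs vt γ = Bm vs vt γ * Cm vs vt := by
  ext v w
  rw [Matrix.mul_apply]
  refine Finset.sum_congr rfl fun a _ => ?_
  simp only [Bm, Cm, twistedVertAdj2, Matrix.of_apply]
  split_ifs with h1 h2 h3 h4 h5 <;> simp_all <;> ring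

lemma mg_eq_mul (vs vt : E → V) (γ : E → ZMod 2) :
    Mg vs vt γ = Cm vs vt * Bm vs vt γ := by
  ext a b
  rw [Matrix.mul_apply]
  have : ∀ v : V, Cm vs vt a v * Bm vs vt γ v b
      = if eterm vs vt a = v then (if einit vs vt b = v then (-1 : ℂ) ^ (γ b.1).val else 0) else 0 := by
    intro v
    simp only [Bm, Cm, Matrix.of_apply]
    split_ifs <;> ring
  rw [Finset.sum_congr rfl fun v _ => this v, Finset.sum_ite_eq univ (eterm vs vt a) _]
  simp only [mem_univ, if_true, Mg, Matrix.of_apply]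
  split_ifs with h1 h2 h3 <;> first | rfl | (exfalso; exact h2 h1.symm) | (exfalso; exact h1 h3.symm)

lemma trace_pow_mul_comm {n m : Type} [Fintype n] [Fintype m] [DecidableEq n] [DecidableEq m]
    (B : Matrix n m ℂ) (C : Matrix m n ℂ) (k : ℕ) :
    Matrix.trace ((B * C) ^ (k+1)) = Matrix.trace ((C * B) ^ (k+1)) := by
  have hsc : ∀ j : ℕ, B * (C * B) ^ j = (B * C) ^ j * B := by
    intro j
    induction j with
    | zero => simp
    | succ j ih =>
      calc B * (C * B) ^ (j + 1)
          = B * ((C * B) ^ j * (C * B)) := by rw [pow_succ]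
        _ = (B * (C * B) ^ j) * (C * B) := by rw [Matrix.mul_assoc]
        _ = ((B * C) ^ j * B) * (C * B) := by rw [ih]
        _ = (B * C) ^ j * ((B * C) * B) := by rw [Matrix.mul_assoc, ← Matrix.mul_assoc B C B]
        _ = ((B * C) ^ j * (B * C)) * B := by rw [← Matrix.mul_assoc]
        _ = (B * C) ^ (j + 1) * B := by rw [pow_succ]
  calc ((B*C)^(k+1)).trace
      = (((B*C)^k * B) * C).trace := by rw [pow_succ, ← Matrix.mul_assoc]
    _ = (C * ((B*C)^k * B)).trace := by rw [Matrix.trace_mul_comm]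
    _ = (C * (B * (C*B)^k)).trace := by rw [hsc k]
    _ = ((C * B) * (C*B)^k).trace := by rw [← Matrix.mul_assoc]
    _ = ((C*B)^(k+1)).trace := by rw [← pow_succ']

lemma trace_tva2 (vs vt : E → V) (γ : E → ZMod 2) (l : ℕ) [NeZero l] :
    Matrix.trace ((twistedVertAdj2 vs vt γ) ^ l)
    = ∑ a : ZMod l → E × Bool,
        (if IsClosedWalk vs vt a then ∏ t : ZMod l, (-1:ℂ) ^ (γ (a t).1).val else 0) := by
  obtain ⟨k, rfl⟩ := Nat.exists_eq_succ_of_ne_zero (NeZero.ne l)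
  rw [tva2_eq_mul, trace_pow_mul_comm, ← mg_eq_mul, trace_pow_zmod]
  refine Finset.sum_congr rfl fun a _ => ?_
  by_cases h : IsClosedWalk vs vt a
  · rw [if_pos h]
    have hterm : ∀ t, Mg vs vt γ (a t) (a (t+1)) = (-1:ℂ)^(γ (a (t+1)).1).val := by
      intro t
      simp only [Mg, Matrix.of_apply]
      rw [if_pos (h t)]
    rw [Finset.prod_congr rfl fun t _ => hterm t]
    exact Fintype.prod_equiv (Equiv.addRight (1 : ZMod (k+1)))
      (fun t => (-1:ℂ)^(γ (a (t+1)).1).val) (fun t => (-1:ℂ)^(γ (a t).1).val) (fun t => rfl)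
  · rw [if_neg h]
    obtain ⟨t, ht⟩ := not_forall.mp h
    refine Finset.prod_eq_zero (mem_univ t) ?_
    simp only [Mg, Matrix.of_apply]
    rw [if_neg ht]

/-- Number of times edge `e` is used by the cyclic sequence `a`. -/
def usage {l : ℕ} [NeZero l] (a : ZMod l → E × Bool) (e : E) : ℕ :=
  (univ.filter fun t : ZMod l => (a t).1 = e).card

lemma zmod2_val_ite : ∀ x : ZMod 2, x.val = if x ≠ 0 then 1 else 0 := by decide

lemma neg_one_pow_sigma {S : Type} [Fintype S] [DecidableEq S] (γ : S → ZMod 2) :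
    (-1 : ℂ) ^ (univ.filter fun e => γ e ≠ 0).card = ∏ e : S, (-1 : ℂ) ^ (γ e).val := by
  rw [Finset.prod_pow_eq_pow_sum]
  congr 1
  rw [Finset.card_filter]
  exact Finset.sum_congr rfl fun e _ => (zmod2_val_ite (γ e)).symm

lemma prod_usage {l : ℕ} [NeZero l] (a : ZMod l → E × Bool) (h : E → ℂ) :
    (∏ t : ZMod l, h ((a t).1)) = ∏ e : E, h e ^ usage a e := by
  rw [← Finset.prod_fiberwise univ (fun t => (a t).1) (fun t => h ((a t).1))]
  refine Finset.prod_congr rfl fun e _ => ?_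
  rw [Finset.prod_congr rfl (fun t ht => by rw [(Finset.mem_filter.mp ht).2] : ∀ t ∈ univ.filter fun t => (a t).1 = e, h ((a t).1) = h e),
    Finset.prod_const]
  rfl

lemma sum_zmod2_pow (c : ℕ) : (∑ x : ZMod 2, ((-1:ℂ) ^ x.val) ^ (1 + c)) = if Odd c then 2 else 0 := by
  have huniv : (univ : Finset (ZMod 2)) = {0, 1} := by decide
  rw [huniv, Finset.sum_insert (by decide), Finset.sum_singleton]
  have h0 : ((0 : ZMod 2)).val = 0 := rfl
  have h1 : ((1 : ZMod 2)).val = 1 := rfl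
  rw [h0, h1, pow_zero, one_pow, pow_one]
  rcases Nat.even_or_odd c with h | h
  · rw [if_neg (by simpa using h)]
    rw [Odd.neg_one_pow (by rcases h with ⟨j, hj⟩; exact ⟨j, by omega⟩ : Odd (1 + c))]
    ring
  · rw [if_pos h, Even.neg_one_pow (by rcases h with ⟨j, hj⟩; exact ⟨j+1, by omega⟩)]
    ring

lemma gamma_char_sum (T : Finset E) {l : ℕ} [NeZero l] (a : ZMod l → E × Bool) :
    (∑ γ : {e : E // e ∉ T} → ZMod 2,
      (-1 : ℂ) ^ (univ.filter fun e : {e : E // e ∉ T} => γ e ≠ 0).card *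
        ∏ t : ZMod l, (-1:ℂ) ^ ((extC T γ) ((a t).1)).val)
    = if (∀ e : {e : E // e ∉ T}, Odd (usage a e.1))
        then (2:ℂ) ^ (Fintype.card {e : E // e ∉ T}) else 0 := by
  have step1 : ∀ γ : {e : E // e ∉ T} → ZMod 2,
      (-1 : ℂ) ^ (univ.filter fun e : {e : E // e ∉ T} => γ e ≠ 0).card *
        ∏ t : ZMod l, (-1:ℂ) ^ ((extC T γ) ((a t).1)).val
      = ∏ e : {e : E // e ∉ T}, ((-1:ℂ) ^ (γ e).val) ^ (1 + usage a e.1) := by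
    intro γ
    rw [prod_usage a (fun e => (-1:ℂ) ^ ((extC T γ) e).val)]
    have hsplit : (∏ e : E, ((-1:ℂ) ^ ((extC T γ) e).val) ^ usage a e)
        = ∏ e : {e : E // e ∉ T}, ((-1:ℂ) ^ (γ e).val) ^ usage a e.1 := by
      rw [← Finset.prod_mul_prod_compl T]
      rw [Finset.prod_congr rfl (fun e he => by
        simp [extC, he] : ∀ e ∈ T, ((-1:ℂ) ^ ((extC T γ) e).val) ^ usage a e = 1)]
      rw [Finset.prod_const_one, one_mul]
      rw [Finset.prod_subtype Tᶜ (fun e => Finset.mem_compl) (fun e => ((-1:ℂ) ^ ((extC T γ) e).val) ^ usage a e)]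
      refine Finset.prod_congr rfl fun e _ => ?_
      have : extC T γ e.1 = γ e := by simp [extC, e.2]
      rw [this]
    rw [hsplit, neg_one_pow_sigma γ, ← Finset.prod_mul_distrib]
    exact Finset.prod_congr rfl fun e _ => by rw [pow_add, pow_one]
  rw [Finset.sum_congr rfl fun γ _ => step1 γ]
  rw [← Fintype.prod_sum (fun (e : {e : E // e ∉ T}) (x : ZMod 2) => ((-1:ℂ) ^ x.val) ^ (1 + usage a e.1))]
  rw [Finset.prod_congr rfl fun e _ => sum_zmod2_pow (usage a e.1)]
  by_cases hall : ∀ e : {e : E // e ∉ T}, Odd (usage a e.1)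
  · rw [if_pos hall, Finset.prod_congr rfl fun e _ => if_pos (hall e), Finset.prod_const]
    rw [Finset.card_univ]
  · rw [if_neg hall]
    obtain ⟨e, he⟩ := not_forall.mp hall
    exact Finset.prod_eq_zero (mem_univ e) (if_neg he)
end Factor
section Tree
variable {V E : Type} [Fintype V] [Fintype E] [DecidableEq V] [DecidableEq E] (vs vt : E → V)

lemma reach_mono {F F' : Finset E} (h : F ⊆ F') {v w : V} :
    Reach vs vt F v w → Reach vs vt F' v w :=
  fun hr => Relation.ReflTransGen.mono (r := (fun v w => ∃ e ∈ F, (vs e = v ∧ vt e = w) ∨ (vs e = w ∧ vt e = v))) (p := (fun v w => ∃ e ∈ F', (vs e = v ∧ vt e = w) ∨ (vs e = w ∧ vt e = v)))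
    (fun a b ⟨e, he, hor⟩ => ⟨e, h he, hor⟩) _ _ hr

lemma reach_symm {F : Finset E} {v w : V} : Reach vs vt F v w → Reach vs vt F w v :=
  fun h => by
    haveI : Std.Symm (fun v w => ∃ e ∈ F, (vs e = v ∧ vt e = w) ∨ (vs e = w ∧ vt e = v)) := ⟨fun a b ⟨e, he, hh⟩ => ⟨e, he, hh.symm⟩⟩
    exact Std.Symm.symm (r := Relation.ReflTransGen (fun v w => ∃ e ∈ F, (vs e = v ∧ vt e = w) ∨ (vs e = w ∧ vt e = v))) _ _ h

lemma reach_step {F : Finset E} {e : E} (he : e ∈ F) :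
    Reach vs vt F (vs e) (vt e) :=
  Relation.ReflTransGen.single ⟨e, he, Or.inl ⟨rfl, rfl⟩⟩

/-- Setoid of connectivity by edges in `F`. -/
def reachSetoid (F : Finset E) : Setoid V where
  r v w := Reach vs vt F v w
  iseqv := ⟨fun _ => Relation.ReflTransGen.refl, reach_symm vs vt, fun h h' => h.trans h'⟩

lemma reach_empty {v w : V} (h : Reach vs vt (∅ : Finset E) v w) : v = w := by
  induction h with
  | refl => rfl
  | tail hab hstep ih =>
    obtain ⟨e, he, _⟩ := hstep
    exact absurd he (Finset.notMem_empty e)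

lemma reach_insert_cases {F : Finset E} {e : E} {v w : V}
    (h : Reach vs vt (insert e F) v w) :
    Reach vs vt F v w ∨ ((Reach vs vt F v (vs e) ∨ Reach vs vt F v (vt e)) ∧
      (Reach vs vt F (vs e) w ∨ Reach vs vt F (vt e) w)) := by
  induction h with
  | refl => exact Or.inl Relation.ReflTransGen.refl
  | @tail b c hab hstep ih =>
    obtain ⟨f, hf, hor⟩ := hstep
    rcases Finset.mem_insert.mp hf with rfl | hfF
    · -- crossing the special edge
      rcases hor with ⟨h1, h2⟩ | ⟨h1, h2⟩
      · -- vs f = b, vt f = c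
        right
        refine ⟨?_, Or.inr (by rw [h2]; exact Relation.ReflTransGen.refl)⟩
        rcases ih with hvb | ⟨hA, _⟩
        · exact Or.inl (by rw [h1]; exact hvb)
        · exact hA
      · right
        refine ⟨?_, Or.inl (by rw [h1]; exact Relation.ReflTransGen.refl)⟩
        rcases ih with hvb | ⟨hA, _⟩
        · exact Or.inr (by rw [h2]; exact hvb)
        · exact hA
    · have hbc : Reach vs vt F b c := Relation.ReflTransGen.single ⟨f, hfF, hor⟩
      rcases ih with hvb | ⟨hA, hB⟩
      · exact Or.inl (hvb.trans hbc)
      · refine Or.inr ⟨hA, ?_⟩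
        rcases hB with h' | h'
        · exact Or.inl (h'.trans hbc)
        · exact Or.inr (h'.trans hbc)

lemma card_quot_step (F : Finset E) (e : E) :
    Nat.card (Quotient (reachSetoid vs vt F)) ≤
      Nat.card (Quotient (reachSetoid vs vt (insert e F))) + 1 := by
  classical
  set s1 := reachSetoid vs vt F
  set s2 := reachSetoid vs vt (insert e F)
  let φ : Quotient s1 → Quotient s2 :=
    Quotient.map' id (fun a b h => reach_mono vs vt (Finset.subset_insert e F) h)
  let b0 : Quotient s1 := Quotient.mk'' (vt e)
  let ψ : Quotient s1 → Option (Quotient s2) := fun x => if x = b0 then none else some (φ x)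
  have hinj : Function.Injective ψ := by
    intro x y hxy
    by_cases hx : x = b0 <;> by_cases hy : y = b0
    · rw [hx, hy]
    · simp only [ψ, if_pos hx, if_neg hy] at hxy; exact absurd hxy.symm (Option.some_ne_none _)
    · simp only [ψ, if_neg hx, if_pos hy] at hxy; exact absurd hxy (Option.some_ne_none _)
    · simp only [ψ, if_neg hx, if_neg hy, Option.some.injEq] at hxy
      obtain ⟨v, rfl⟩ : ∃ v, Quotient.mk'' v = x := ⟨Quotient.out x, Quotient.out_eq x⟩
      obtain ⟨w, rfl⟩ : ∃ w, Quotient.mk'' w = y := ⟨Quotient.out y, Quotient.out_eq y⟩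
      have h2 : Reach vs vt (insert e F) v w := Quotient.eq''.mp (by
        exact hxy)
      refine Quotient.sound' ?_
      rcases reach_insert_cases vs vt h2 with h | ⟨hA, hB⟩
      · exact h
      · have hA' : Reach vs vt F v (vs e) := by
          rcases hA with h' | h'
          · exact h'
          · exact absurd (Quotient.sound' h') hx
        have hB' : Reach vs vt F (vs e) w := by
          rcases hB with h' | h'
          · exact h'
          · exact absurd (Quotient.sound' h').symm hy
        exact hA'.trans hB'
  calc Nat.card (Quotient s1) ≤ Nat.card (Option (Quotient s2)) :=
        Nat.card_le_card_of_injective ψ hinj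
    _ = Nat.card (Quotient s2) + 1 := Finite.card_option

lemma card_quot_reach (F : Finset E) :
    Fintype.card V ≤ Nat.card (Quotient (reachSetoid vs vt F)) + F.card := by
  classical
  induction F using Finset.induction_on with
  | empty =>
    have hinj : Function.Injective (Quotient.mk'' : V → Quotient (reachSetoid vs vt ∅)) := by
      intro v w h
      exact reach_empty vs vt (Quotient.eq''.mp h)
    simpa [← Nat.card_eq_fintype_card] using Nat.card_le_card_of_injective _ hinj
  | @insert e F he ih =>
    calc Fintype.card V ≤ Nat.card (Quotient (reachSetoid vs vt F)) + F.card := ih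
      _ ≤ (Nat.card (Quotient (reachSetoid vs vt (insert e F))) + 1) + F.card :=
          Nat.add_le_add_right (card_quot_step vs vt F e) _
      _ = Nat.card (Quotient (reachSetoid vs vt (insert e F))) + (insert e F).card := by
          rw [Finset.card_insert_of_notMem he]; omega

lemma connected_card_bound (F : Finset E) (h : ∀ v w : V, Reach vs vt F v w) :
    Fintype.card V ≤ F.card + 1 := by
  have hsub : Subsingleton (Quotient (reachSetoid vs vt F)) := by
    constructor
    refine fun x y => Quotient.inductionOn₂' x y (fun v w => Quotient.sound' (h v w))
  have h1 : Nat.card (Quotient (reachSetoid vs vt F)) ≤ 1 := by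
    rcases isEmpty_or_nonempty (Quotient (reachSetoid vs vt F)) with hq | hq
    · rw [Nat.card_of_isEmpty]; omega
    · haveI : Unique (Quotient (reachSetoid vs vt F)) :=
        ⟨⟨Classical.arbitrary _⟩, fun x => hsub.allEq x _⟩
      rw [Nat.card_unique]
  have := card_quot_reach vs vt F
  omega

lemma detour_exists (β : E → ZMod 2)
    (hcirc : ∀ v, (∑ e ∈ univ.filter fun e => vs e = v, β e) =
      ∑ e ∈ univ.filter fun e => vt e = v, β e)
    {e₀ : E} (hβ : β e₀ ≠ 0) :
    Reach vs vt ((univ.filter fun e => β e ≠ 0).erase e₀) (vs e₀) (vt e₀) := by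
  classical
  set S' := (univ.filter fun e => β e ≠ 0).erase e₀ with hS'
  set C : Finset V := univ.filter (fun w => Reach vs vt S' (vs e₀) w) with hC
  have hclosed : ∀ e ∈ S', (vs e ∈ C ↔ vt e ∈ C) := by
    intro e he
    simp only [hC, mem_filter, mem_univ, true_and]
    constructor
    · intro h; exact h.tail ⟨e, he, Or.inl ⟨rfl, rfl⟩⟩
    · intro h; exact h.tail ⟨e, he, Or.inr ⟨rfl, rfl⟩⟩
  have h3 : ∀ (f : E → V), (∑ v ∈ C, ∑ e ∈ univ.filter fun e => f e = v, β e)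
      = ∑ e : E, (if f e ∈ C then β e else 0) := by
    intro f
    have : ∀ v, (∑ e ∈ univ.filter fun e => f e = v, β e)
        = ∑ e : E, (if f e = v then β e else 0) := by
      intro v; rw [Finset.sum_filter]
    rw [Finset.sum_congr rfl fun v _ => this v, Finset.sum_comm]
    exact Finset.sum_congr rfl fun e _ => Finset.sum_ite_eq C (f e) (fun _ => β e)
  have key : (∑ e : E, ((if vs e ∈ C then β e else 0) + (if vt e ∈ C then β e else 0))) = 0 := by
    rw [Finset.sum_add_distrib, ← h3 vs, ← h3 vt, ← Finset.sum_add_distrib]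
    refine Finset.sum_eq_zero fun v _ => ?_
    rw [hcirc v]
    exact CharTwo.add_self_eq_zero _
  have hterm : ∀ e ∈ (univ : Finset E), e ≠ e₀ →
      ((if vs e ∈ C then β e else 0) + (if vt e ∈ C then β e else 0)) = 0 := by
    intro e _ hne
    by_cases hb : β e = 0
    · simp [hb]
    · have heS' : e ∈ S' := by
        rw [hS', Finset.mem_erase]; exact ⟨hne, Finset.mem_filter.mpr ⟨mem_univ e, hb⟩⟩
      by_cases h : vs e ∈ C
      · rw [if_pos h, if_pos ((hclosed e heS').mp h)]; exact CharTwo.add_self_eq_zero _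
      · rw [if_neg h, if_neg (fun hc => h ((hclosed e heS').mpr hc)), add_zero]
  have he₀ : ((if vs e₀ ∈ C then β e₀ else 0) + (if vt e₀ ∈ C then β e₀ else 0)) = 0 := by
    rw [← Finset.sum_eq_single_of_mem e₀ (mem_univ e₀) hterm]
    exact key
  have hvs : vs e₀ ∈ C := by
    rw [hC]; exact Finset.mem_filter.mpr ⟨mem_univ _, Relation.ReflTransGen.refl⟩
  rw [if_pos hvs] at he₀
  by_cases hvt : vt e₀ ∈ C
  · rw [hC] at hvt; exact (Finset.mem_filter.mp hvt).2
  · rw [if_neg hvt, add_zero] at he₀; exact absurd he₀ hβ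

lemma reach_avoid {F : Finset E} {e₀ : E}
    (hdet : Reach vs vt (F.erase e₀) (vs e₀) (vt e₀)) {v w : V}
    (h : Reach vs vt F v w) : Reach vs vt (F.erase e₀) v w := by
  induction h with
  | refl => exact Relation.ReflTransGen.refl
  | @tail b c hab hstep ih =>
    obtain ⟨f, hf, hor⟩ := hstep
    by_cases hfe : f = e₀
    · subst hfe
      rcases hor with ⟨h1, h2⟩ | ⟨h1, h2⟩
      · exact ih.trans (by rw [h1, h2] at hdet; exact hdet)
      · exact ih.trans (by have := reach_symm vs vt hdet; rw [h1, h2] at this; exact this)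
    · exact ih.tail ⟨f, Finset.mem_erase.mpr ⟨hfe, hf⟩, hor⟩

lemma circ_on_tree (T : Finset E) (hT : IsSpanningTree vs vt T) (β : E → ZMod 2)
    (hcirc : ∀ v, (∑ e ∈ univ.filter fun e => vs e = v, β e) =
      ∑ e ∈ univ.filter fun e => vt e = v, β e)
    (hsupp : ∀ e ∉ T, β e = 0) : ∀ e, β e = 0 := by
  by_contra h
  push_neg at h
  obtain ⟨e₀, hβ⟩ := h
  have he₀T : e₀ ∈ T := by
    by_contra h'; exact hβ (hsupp e₀ h')
  have hdet := detour_exists vs vt β hcirc hβ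
  have hsub : (univ.filter fun e => β e ≠ 0).erase e₀ ⊆ T.erase e₀ := by
    intro e he
    obtain ⟨hne, hmem⟩ := Finset.mem_erase.mp he
    refine Finset.mem_erase.mpr ⟨hne, ?_⟩
    by_contra h'
    exact (Finset.mem_filter.mp hmem).2 (hsupp e h')
  have hdet' : Reach vs vt (T.erase e₀) (vs e₀) (vt e₀) := reach_mono vs vt hsub hdet
  have hconn : ∀ v w : V, Reach vs vt (T.erase e₀) v w :=
    fun v w => reach_avoid vs vt hdet' (hT.1 v w)
  have hcard := connected_card_bound vs vt (T.erase e₀) hconn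
  rw [Finset.card_erase_of_mem he₀T] at hcard
  have hTpos : 1 ≤ T.card := Finset.card_pos.mpr ⟨e₀, he₀T⟩
  have hTcard := hT.2
  omega
end Tree

section Euler
variable {V E : Type} [Fintype V] [Fintype E] [DecidableEq V] [DecidableEq E] (vs vt : E → V)

lemma usage_cast {l : ℕ} [NeZero l] (a : ZMod l → E × Bool) (e : E) :
    ((usage a e : ZMod 2)) = ∑ t : ZMod l, (if (a t).1 = e then (1 : ZMod 2) else 0) := by
  rw [usage, Finset.card_filter]
  push_cast
  exact Finset.sum_congr rfl fun t _ => by split_ifs <;> simp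

lemma sum_usage_endpoint {l : ℕ} [NeZero l] (a : ZMod l → E × Bool) (f : E → V) (v : V) :
    (∑ e ∈ univ.filter fun e => f e = v, ((usage a e : ZMod 2)))
      = ∑ t : ZMod l, (if f ((a t).1) = v then (1 : ZMod 2) else 0) := by
  rw [Finset.sum_filter]
  have step : ∀ e : E, (if f e = v then ((usage a e : ZMod 2)) else 0)
      = ∑ t : ZMod l, (if (a t).1 = e then (if f e = v then (1 : ZMod 2) else 0) else 0) := by
    intro e
    split_ifs with h
    · rw [usage_cast]
    · simp
  rw [Finset.sum_congr rfl fun e _ => step e, Finset.sum_comm]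
  refine Finset.sum_congr rfl fun t _ => ?_
  rw [Finset.sum_ite_eq univ ((a t).1) (fun e => if f e = v then (1 : ZMod 2) else 0),
    if_pos (mem_univ _)]

lemma usage_parity_circ {l : ℕ} [NeZero l] (a : ZMod l → E × Bool)
    (hc : IsClosedWalk vs vt a) (v : V) :
    (∑ e ∈ univ.filter fun e => vs e = v, ((usage a e : ZMod 2)))
      = ∑ e ∈ univ.filter fun e => vt e = v, ((usage a e : ZMod 2)) := by
  rw [sum_usage_endpoint a vs v, sum_usage_endpoint a vt v]
  have hsum : (∑ t : ZMod l, (if vs ((a t).1) = v then (1 : ZMod 2) else 0))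
      + (∑ t : ZMod l, (if vt ((a t).1) = v then (1 : ZMod 2) else 0)) = 0 := by
    rw [← Finset.sum_add_distrib]
    have h1 : ∀ t : ZMod l, ((if vs ((a t).1) = v then (1 : ZMod 2) else 0)
        + (if vt ((a t).1) = v then (1 : ZMod 2) else 0))
        = ((if einit vs vt (a t) = v then (1 : ZMod 2) else 0)
          + (if eterm vs vt (a t) = v then (1 : ZMod 2) else 0)) := by
      intro t
      rcases Bool.eq_false_or_eq_true (a t).2 with hb | hb <;>
        simp [einit, eterm, hb, add_comm]
    rw [Finset.sum_congr rfl fun t _ => h1 t, Finset.sum_add_distrib]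
    have h2 : (∑ t : ZMod l, (if eterm vs vt (a t) = v then (1 : ZMod 2) else 0))
        = ∑ t : ZMod l, (if einit vs vt (a t) = v then (1 : ZMod 2) else 0) := by
      rw [Finset.sum_congr rfl fun t _ => by rw [hc t]]
      exact Fintype.sum_equiv (Equiv.addRight (1 : ZMod l)) _ _ (fun t => rfl)
    rw [h2]
    exact CharTwo.add_self_eq_zero _
  have := hsum
  calc (∑ t : ZMod l, (if vs ((a t).1) = v then (1 : ZMod 2) else 0))
      = (∑ t : ZMod l, (if vs ((a t).1) = v then (1 : ZMod 2) else 0)) + 0 := by rw [add_zero]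
    _ = (∑ t : ZMod l, (if vs ((a t).1) = v then (1 : ZMod 2) else 0)) +
        ((∑ t : ZMod l, (if vs ((a t).1) = v then (1 : ZMod 2) else 0))
          + (∑ t : ZMod l, (if vt ((a t).1) = v then (1 : ZMod 2) else 0))) := by rw [hsum]
    _ = ((∑ t : ZMod l, (if vs ((a t).1) = v then (1 : ZMod 2) else 0)) +
        (∑ t : ZMod l, (if vs ((a t).1) = v then (1 : ZMod 2) else 0))) +
          (∑ t : ZMod l, (if vt ((a t).1) = v then (1 : ZMod 2) else 0)) := by ring
    _ = ∑ t : ZMod l, (if vt ((a t).1) = v then (1 : ZMod 2) else 0) := by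
        rw [CharTwo.add_self_eq_zero, zero_add]

lemma sum_usage_eq_card [NeZero (Fintype.card E)]
    (a : ZMod (Fintype.card E) → E × Bool) :
    ∑ e : E, usage a e = Fintype.card E := by
  have := Finset.card_eq_sum_card_fiberwise
    (f := fun t : ZMod (Fintype.card E) => (a t).1) (s := univ) (t := univ)
    (fun t _ => mem_univ _)
  rw [Finset.card_univ, ZMod.card] at this
  exact Eq.trans (by rfl) this.symm

lemma odd_usage_iff_eulerian [NeZero (Fintype.card E)]
    (hEul : ∀ v, Even (degree vs vt v))
    (T : Finset E) (hT : IsSpanningTree vs vt T)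
    (a : ZMod (Fintype.card E) → E × Bool) (hc : IsClosedWalk vs vt a) :
    (∀ e : {e : E // e ∉ T}, Odd (usage a e.1)) ↔
      Function.Bijective (fun i => (a i).1) := by
  constructor
  · intro hodd
    -- the usage-parity defect is a circulation supported on T
    set βn : E → ZMod 2 := fun e => ((usage a e : ZMod 2)) + 1 with hβn
    have hcircβ : ∀ v, (∑ e ∈ univ.filter fun e => vs e = v, βn e) =
        ∑ e ∈ univ.filter fun e => vt e = v, βn e := by
      intro v
      rw [hβn]
      simp only
      rw [Finset.sum_add_distrib, Finset.sum_add_distrib,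
        usage_parity_circ vs vt a hc v, Finset.sum_const, Finset.sum_const]
      congr 1
      have hdeg := hEul v
      rw [degree] at hdeg
      obtain ⟨r, hr⟩ := hdeg
      have h1 : ((univ.filter fun e => vs e = v).card : ZMod 2)
          = ((univ.filter fun e => vt e = v).card : ZMod 2) := by
        rw [ZMod.natCast_eq_natCast_iff]
        unfold Nat.ModEq
        omega
      rw [nsmul_eq_mul, nsmul_eq_mul, mul_one, mul_one, h1]
    have hsupp : ∀ e ∉ T, βn e = 0 := by
      intro e he
      have ho := hodd ⟨e, he⟩
      rw [hβn]
      simp only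
      rw [Nat.odd_iff] at ho
      rw [← Nat.mod_add_div (usage a e) 2, ho]
      push_cast
      ring_nf
      rw [show ((2:ZMod 2)) = 0 from rfl]
      ring
    have hzero := circ_on_tree vs vt T hT βn hcircβ hsupp
    have hone : ∀ e, usage a e = 1 := by
      have hodd' : ∀ e, usage a e % 2 = 1 := by
        intro e
        have h0 := hzero e
        rw [hβn] at h0
        simp only at h0
        have : ((usage a e : ZMod 2)) = 1 := by
          have h1 : (usage a e : ZMod 2) + (1 + 1) = 1 := by rw [← add_assoc, h0, zero_add]
          rwa [show ((1:ZMod 2) + 1) = 0 by decide, add_zero] at h1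
        have hcast : ((usage a e % 2 : ℕ) : ZMod 2) = 1 := by
          rwa [ZMod.natCast_mod]
        rcases Nat.mod_two_eq_zero_or_one (usage a e) with h | h
        · rw [h] at hcast; exact absurd hcast (by decide)
        · exact h
      have hge : ∀ e ∈ (univ : Finset E), 1 ≤ usage a e := by
        intro e _
        have := hodd' e
        omega
      have hsum : (∑ e : E, (1:ℕ)) = ∑ e : E, usage a e := by
        rw [sum_usage_eq_card a, Finset.sum_const, Finset.card_univ, smul_eq_mul, mul_one]
      intro e
      exact ((Finset.sum_eq_sum_iff_of_le hge).mp hsum e (mem_univ e)).symm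
    -- bijectivity from all fibers having one element
    rw [Fintype.bijective_iff_injective_and_card]
    constructor
    · intro s t hst
      by_contra hne
      have hsub : ({s, t} : Finset (ZMod (Fintype.card E))) ⊆
          univ.filter fun u => (a u).1 = (a s).1 := by
        intro u hu
        rcases Finset.mem_insert.mp hu with rfl | hu
        · exact Finset.mem_filter.mpr ⟨mem_univ _, rfl⟩
        · rw [Finset.mem_singleton.mp hu]
          exact Finset.mem_filter.mpr ⟨mem_univ _, hst.symm⟩
      have h2 : 2 ≤ usage a ((a s).1) := by
        rw [usage]
        calc 2 = ({s, t} : Finset (ZMod (Fintype.card E))).card := by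
              rw [Finset.card_insert_of_notMem (by simpa using hne), Finset.card_singleton]
          _ ≤ _ := Finset.card_le_card hsub
      rw [hone ((a s).1)] at h2
      omega
    · rw [ZMod.card]
  · intro hbij e
    have : usage a e.1 = 1 := by
      rw [usage, Finset.card_eq_one]
      obtain ⟨t₀, ht₀⟩ := hbij.surjective e.1
      refine ⟨t₀, ?_⟩
      ext s
      simp only [Finset.mem_filter, mem_univ, true_and, Finset.mem_singleton]
      constructor
      · intro hs; exact hbij.injective (hs.trans ht₀.symm)
      · intro hs; rw [hs]; exact ht₀
    rw [this]
    exact odd_one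
end Euler

section Orbit
variable {V E : Type} [Fintype V] [Fintype E] [DecidableEq V] [DecidableEq E]
  (vs vt : E → V) [NeZero (Fintype.card E)]

/-- Rotation of an Eulerian circuit. -/
def rotCirc (b : {a : ZMod (Fintype.card E) → E × Bool // IsEulerianCircuit vs vt a})
    (k : ZMod (Fintype.card E)) :
    {a : ZMod (Fintype.card E) → E × Bool // IsEulerianCircuit vs vt a} :=
  ⟨fun i => b.1 (i + k), by
    constructor
    · intro i
      have := b.2.1 (i + k)
      rwa [show i + k + 1 = i + 1 + k by ring] at this
    · show Function.Bijective ((fun i => (b.1 i).1) ∘ (fun i => i + k))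
      exact Function.Bijective.comp b.2.2 (Equiv.addRight k).bijective⟩

lemma card_eulerian_circuits :
    Fintype.card {a : ZMod (Fintype.card E) → E × Bool // IsEulerianCircuit vs vt a}
      = Fintype.card (Quotient (eulSetoid vs vt)) * Fintype.card E := by
  classical
  rw [← Finset.card_univ,
    Finset.card_eq_sum_card_fiberwise
      (f := fun a : {a : ZMod (Fintype.card E) → E × Bool // IsEulerianCircuit vs vt a} =>
        Quotient.mk (eulSetoid vs vt) a)
      (t := univ) (fun a _ => mem_univ _)]
  have hfib : ∀ q : Quotient (eulSetoid vs vt),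
      (univ.filter fun a => Quotient.mk (eulSetoid vs vt) a = q).card = Fintype.card E := by
    intro q
    obtain ⟨b, rfl⟩ := Quotient.exists_rep q
    have hcb : (univ : Finset (ZMod (Fintype.card E))).card
        = (univ.filter fun a => Quotient.mk (eulSetoid vs vt) a = Quotient.mk _ b).card := by
      apply Finset.card_bij (fun (k : ZMod (Fintype.card E)) _ => rotCirc vs vt b k)
      · intro k _
        refine Finset.mem_filter.mpr ⟨mem_univ _, Quotient.sound ⟨-k, fun i => show b.1 i = b.1 (i + -k + k) by rw [neg_add_cancel_right]⟩⟩
      · intro k _ k' _ hkk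
        have h0 : (rotCirc vs vt b k).1 0 = (rotCirc vs vt b k').1 0 := by rw [hkk]
        have h1 : b.1 (0 + k) = b.1 (0 + k') := h0
        rw [zero_add, zero_add] at h1
        exact b.2.2.injective (congrArg Prod.fst h1 : (fun i => (b.1 i).1) k = _)
      · intro a ha
        have heq := (Finset.mem_filter.mp ha).2
        obtain ⟨k, hk⟩ := Quotient.eq.mp heq
        refine ⟨-k, mem_univ _, ?_⟩
        apply Subtype.ext
        funext i
        show b.1 (i + -k) = a.1 i
        rw [hk (i + -k), neg_add_cancel_right]
    exact hcb.symm.trans ((Finset.card_univ).trans (ZMod.card _))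
  rw [Finset.sum_congr rfl fun q _ => hfib q, Finset.sum_const, Finset.card_univ, smul_eq_mul]
end Orbit


theorem stmt14 {V E : Type} [Fintype V] [Fintype E] [DecidableEq V] [DecidableEq E]
    (vs vt : E → V) [NeZero (Fintype.card E)]
    (hEul : ∀ v, Even (degree vs vt v))
    (T : Finset E) (hT : IsSpanningTree vs vt T)
    (g : ℕ) (hg : g + Fintype.card V = Fintype.card E + 1) :
    (Fintype.card (Quotient (eulSetoid vs vt)) : ℂ) =
      (1 / ((Fintype.card E : ℂ) * 2 ^ g)) *
        ∑ γ : {e : E // e ∉ T} → ZMod 2,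
          (-1 : ℂ) ^ (Finset.univ.filter fun e : {e : E // e ∉ T} => γ e ≠ 0).card *
            Matrix.trace ((twistedVertAdj2 vs vt (extC T γ)) ^ (Fintype.card E)) := by
  classical
  have hm : (Fintype.card E : ℂ) ≠ 0 := Nat.cast_ne_zero.mpr (NeZero.ne _)
  have hgS : Fintype.card {e : E // e ∉ T} = g := by
    have h1 : Fintype.card {e : E // e ∉ T} = Fintype.card E - T.card := by
      rw [Fintype.card_subtype_compl (p := fun e => e ∈ T), Fintype.card_coe]
    have h2 := hT.2
    have h3 : T.card ≤ Fintype.card E := by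
      rw [← Fintype.card_coe]
      exact Fintype.card_le_of_injective (fun x => x.1) (fun x y h => Subtype.ext h)
    omega
  have hstep1 : ∀ γ : {e : E // e ∉ T} → ZMod 2,
      Matrix.trace ((twistedVertAdj2 vs vt (extC T γ)) ^ (Fintype.card E))
      = ∑ a : ZMod (Fintype.card E) → E × Bool,
          (if IsClosedWalk vs vt a then
            ∏ t : ZMod (Fintype.card E), (-1:ℂ) ^ ((extC T γ) ((a t).1)).val else 0) :=
    fun γ => trace_tva2 vs vt (extC T γ) _
  rw [Finset.sum_congr rfl fun γ _ => by rw [hstep1 γ]]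
  rw [Finset.sum_congr rfl fun γ _ => Finset.mul_sum _ _ _]
  rw [Finset.sum_comm]
  have hwalk : ∀ a : ZMod (Fintype.card E) → E × Bool,
      (∑ γ : {e : E // e ∉ T} → ZMod 2,
        (-1:ℂ) ^ (Finset.univ.filter fun e : {e : E // e ∉ T} => γ e ≠ 0).card *
          (if IsClosedWalk vs vt a then
            ∏ t : ZMod (Fintype.card E), (-1:ℂ) ^ ((extC T γ) ((a t).1)).val else 0))
      = if IsEulerianCircuit vs vt a then (2:ℂ)^g else 0 := by
    intro a
    by_cases hcw : IsClosedWalk vs vt a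
    · rw [Finset.sum_congr rfl fun γ _ => by rw [if_pos hcw]]
      rw [gamma_char_sum T a, hgS]
      by_cases hb : Function.Bijective (fun i => (a i).1)
      · rw [if_pos ((odd_usage_iff_eulerian vs vt hEul T hT a hcw).mpr hb), if_pos ⟨hcw, hb⟩]
      · rw [if_neg (fun h => hb ((odd_usage_iff_eulerian vs vt hEul T hT a hcw).mp h)),
          if_neg (fun h => hb h.2)]
    · rw [Finset.sum_congr rfl fun γ _ => by rw [if_neg hcw, mul_zero],
        Finset.sum_const_zero, if_neg (fun h => hcw h.1)]
  rw [Finset.sum_congr rfl fun a _ => hwalk a]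
  rw [← Finset.sum_filter, Finset.sum_const, ← Fintype.card_subtype,
    card_eulerian_circuits vs vt, nsmul_eq_mul]
  push_cast
  field_simp
end
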